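/- Let p be a prime and let n ∈ M_p^(2). If q is a prime with q < p and q | n, then q ∈ {2, 3, 7, 43}. -/

import Mathlib

/-- `S k n = ∑_{i=1}^{n} i^k`. -/
def S (k n : ℕ) : ℕ := ∑ i ∈ Finset.Icc 1 n, i ^ k

open Finset

lemma aux_sum_pow_zmod (q : ℕ) [Fact q.Prime] (i : ℕ) (hi : i ≠ 0) :
    ∑ x : ZMod q, x ^ i = if q - 1 ∣ i then -1 else 0 := by
  have h0 : ∑ x : ZMod q, x ^ i = ∑ x : (ZMod q)ˣ, ((x : ZMod q)) ^ i := by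
    let φ : (ZMod q)ˣ ↪ ZMod q := ⟨Units.val, Units.val_injective⟩
    have h : univ.map φ = univ \ {0} := by
      ext x
      simpa only [mem_map, mem_univ, Function.Embedding.coeFn_mk, true_and, mem_sdiff,
        mem_singleton, φ, IsUnit] using isUnit_iff_ne_zero
    calc
      ∑ x : ZMod q, x ^ i = ∑ x ∈ univ \ {(0 : ZMod q)}, x ^ i := by
        rw [← sum_sdiff ({0} : Finset (ZMod q)).subset_univ, sum_singleton, zero_pow hi, add_zero]
      _ = ∑ x : (ZMod q)ˣ, ((x : ZMod q)) ^ i := by simp [φ, ← h, univ.sum_map φ]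
  rw [h0]
  have := FiniteField.sum_pow_units (ZMod q) i
  rwa [ZMod.card q] at this

lemma aux_sum_range_zmod (q : ℕ) [NeZero q] (f : ZMod q → ZMod q) :
    ∑ j ∈ Finset.range q, f ((j : ℕ) : ZMod q) = ∑ x : ZMod q, f x := by
  apply Finset.sum_nbij' (fun j => ((j : ℕ) : ZMod q)) (fun x => x.val) <;>
    simp [ZMod.val_cast_of_lt, ZMod.val_lt, ZMod.natCast_val, ZMod.natCast_rightInverse,
      Nat.mod_eq_of_lt]
  exact fun a ha => Nat.mod_eq_of_lt ha

lemma aux_block (q : ℕ) [NeZero q] (i c : ℕ) :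
    ∑ j ∈ Finset.range q, (((c + j : ℕ)) : ZMod q) ^ i = ∑ x : ZMod q, x ^ i := by
  have h : ∀ j ∈ Finset.range q,
      ((c + j : ℕ) : ZMod q) ^ i = (fun x : ZMod q => ((c : ZMod q) + x) ^ i) ((j : ℕ) : ZMod q) := by
    intro j _; push_cast; ring
  rw [Finset.sum_congr rfl h]
  exact (aux_sum_range_zmod q fun x => ((c : ZMod q) + x) ^ i).trans
    (Fintype.sum_equiv (Equiv.addLeft (c : ZMod q)) _ _ (fun x => rfl))

lemma aux_cast_S (q : ℕ) [NeZero q] (i : ℕ) (m : ℕ) :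
    ((S i (q * m) : ℕ) : ZMod q) = (m : ZMod q) * ∑ x : ZMod q, x ^ i := by
  have step1 : ∀ n : ℕ,
      ((S i n : ℕ) : ZMod q) = ∑ j ∈ Finset.range n, ((1 + j : ℕ) : ZMod q) ^ i := by
    intro n
    rw [S, Nat.cast_sum]
    rw [show Finset.Icc 1 n = Finset.Ico 1 (n + 1) from by rw [Finset.Ico_add_one_right_eq_Icc],
      Finset.sum_Ico_eq_sum_range]
    simp
  rw [step1]
  induction m with
  | zero => simp
  | succ m ih =>
    rw [Nat.mul_succ, Finset.sum_range_add, ih]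
    have h : ∀ j ∈ Finset.range q,
        ((1 + (q * m + j) : ℕ) : ZMod q) ^ i = (((1 + q * m) + j : ℕ) : ZMod q) ^ i := by
      intro j _; ring_nf
    rw [Finset.sum_congr rfl h, aux_block]
    push_cast
    ring

lemma aux_key2 (n : ℕ) (hn : 0 < n) (q : ℕ) (hq : q.Prime) (hqn : q ∣ n) (hS : ¬ q ∣ S n n) :
    (q - 1) ∣ n ∧ ¬ q ^ 2 ∣ n := by
  haveI : Fact q.Prime := ⟨hq⟩
  obtain ⟨m, rfl⟩ := hqn
  have hc : ((S (q * m) (q * m) : ℕ) : ZMod q) ≠ 0 := by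
    rw [Ne, ZMod.natCast_eq_zero_iff]; exact hS
  rw [aux_cast_S, aux_sum_pow_zmod q (q * m) (by omega)] at hc
  by_cases hd : q - 1 ∣ q * m
  · rw [if_pos hd] at hc
    refine ⟨hd, fun hsq => ?_⟩
    have hqm : q ∣ m := by
      have h' : q * q ∣ q * m := by rwa [← sq]
      exact (mul_dvd_mul_iff_left (show (q : ℕ) ≠ 0 from hq.pos.ne')).mp h'
    have hz : (m : ZMod q) = 0 := (ZMod.natCast_eq_zero_iff _ _).mpr hqm
    rw [hz] at hc
    simp at hc
  · rw [if_neg hd] at hc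
    simp at hc

lemma aux_chain (n p : ℕ) (hcond : ∀ q, q.Prime → q < p → q ∣ n → (q - 1) ∣ n ∧ ¬ q ^ 2 ∣ n) :
    ∀ q, q.Prime → q < p → q ∣ n → q ∈ ({2, 3, 7, 43} : Set ℕ) := by
  intro q
  induction q using Nat.strong_induction_on with
  | _ q ih =>
    intro hq hqp hqn
    obtain ⟨hd, -⟩ := hcond q hq hqp hqn
    have hq1 : q - 1 ≠ 0 := by have := hq.two_le; omega
    have h1806 : (q - 1) ∣ 1806 := by
      rw [← Nat.factorization_le_iff_dvd hq1 (by norm_num)]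
      intro r
      by_cases hr : r.Prime ∧ r ∣ (q - 1)
      · obtain ⟨hrp, hrd⟩ := hr
        have hrq : r < q := lt_of_le_of_lt (Nat.le_of_dvd (Nat.pos_of_ne_zero hq1) hrd) (by omega)
        have hrn : r ∣ n := hrd.trans hd
        have hrmem : r ∈ ({2, 3, 7, 43} : Set ℕ) := ih r hrq hrp (hrq.trans hqp) hrn
        have hnsq : ¬ r ^ 2 ∣ (q - 1) := fun hc =>
          (hcond r hrp (hrq.trans hqp) hrn).2 (hc.trans hd)
        have h1 : (q - 1).factorization r ≤ 1 := by
          by_contra hgt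
          exact hnsq ((Nat.Prime.pow_dvd_iff_le_factorization hrp hq1).mpr (by omega))
        have h2 : 1 ≤ (Nat.factorization 1806) r := by
          refine (Nat.Prime.factorization_pos_of_dvd hrp (by norm_num) ?_)
          rcases hrmem with rfl | rfl | rfl | rfl <;> norm_num
        omega
      · rcases Decidable.not_and_iff_or_not.mp hr with hr | hr
        · simp [Nat.factorization_eq_zero_of_not_prime _ hr]
        · simp [Nat.factorization_eq_zero_of_not_dvd hr]
    have hdivs : Nat.divisors 1806 =
        {1, 2, 3, 6, 7, 14, 21, 42, 43, 86, 129, 258, 301, 602, 903, 1806} := by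
      set_option maxRecDepth 40000 in decide
    have hmem : q - 1 ∈ ({1, 2, 3, 6, 7, 14, 21, 42, 43, 86, 129, 258, 301, 602, 903, 1806} :
        Finset ℕ) := by
      rw [← hdivs]; exact Nat.mem_divisors.mpr ⟨h1806, by norm_num⟩
    simp only [Finset.mem_insert, Finset.mem_singleton] at hmem
    have hqe : q = q - 1 + 1 := by omega
    rcases hmem with h | h | h | h | h | h | h | h | h | h | h | h | h | h | h | h <;>
        rw [h] at hqe <;> subst hqe <;>
      first
        | (exfalso; revert hq; norm_num; done)
        | (simp only [Set.mem_insert_iff, Set.mem_singleton_iff]; norm_num)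

/-- If `n ∈ M_p^(2)` and `q` is a prime with `q < p` and `q ∣ n`, then `q ∈ {2, 3, 7, 43}`. -/
theorem stmt_6 (p : ℕ) (hp : p.Prime) (n : ℕ) (hn : 0 < n)
    (h : S n n ≡ p [MOD n]) (h2 : p ^ 2 ∣ n) (h3 : ¬ p ^ 3 ∣ n)
    (q : ℕ) (hq : q.Prime) (hqp : q < p) (hqn : q ∣ n) :
    q ∈ ({2, 3, 7, 43} : Set ℕ) := by
  have hnd : ∀ r : ℕ, r.Prime → r < p → r ∣ n → ¬ r ∣ S n n := by
    intro r hr hrp hrn hdvd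
    have hr' : S n n ≡ p [MOD r] := h.of_dvd hrn
    have hrp' : r ∣ p := by
      have h0 : S n n ≡ 0 [MOD r] := (Nat.modEq_zero_iff_dvd).mpr hdvd
      exact (Nat.modEq_zero_iff_dvd).mp (hr'.symm.trans h0)
    have := (Nat.prime_dvd_prime_iff_eq hr hp).mp hrp'
    omega
  exact aux_chain n p (fun r hr hrp hrn => aux_key2 n hn r hr hrn (hnd r hr hrp hrn))
    q hq hqp hqn
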